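/- Let A, B be real symmetric n×n matrices with A positive semidefinite and suppose that for some constants ν > 0, τ ≥ 0, σ > 0 the 2n×2n block matrix [[νA, −(1/2)B], [−(1/2)B, (τν/(2σ))A]] is positive semidefinite. Then for every δ > 0, ((2σν + δ²τν)/(2σδ)) Tr(A²) ≥ Tr(A B); in particular, taking δ = √(2σ/τ) (for τ > 0), √(2τν²/σ) Tr(A²) ≥ Tr(A B). -/

import Mathlib

open Matrix

private lemma trace_nonneg_of_psd {m : Type*} [Fintype m] [DecidableEq m]
    {M : Matrix m m ℝ} (hM : M.PosSemidef) : 0 ≤ M.trace := by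
  apply Finset.sum_nonneg
  intro i _
  exact hM.diag_nonneg

private lemma trace_mul_nonneg_of_psd {m : Type*} [Fintype m] [DecidableEq m]
    {X Y : Matrix m m ℝ} (hX : X.PosSemidef) (hY : Y.PosSemidef) :
    0 ≤ (X * Y).trace := by
  obtain ⟨C, rfl⟩ := (by open scoped MatrixOrder Matrix.Norms.L2Operator in exact CStarAlgebra.nonneg_iff_eq_star_mul_self.mp hY.nonneg : ∃ C : Matrix m m ℝ, Y = Cᴴ * C)
  have h : (X * (Cᴴ * C)).trace = (C * X * Cᴴ).trace := by
    calc (X * (Cᴴ * C)).trace = ((Cᴴ * C) * X).trace := Matrix.trace_mul_comm _ _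
      _ = (Cᴴ * (C * X)).trace := by rw [Matrix.mul_assoc]
      _ = ((C * X) * Cᴴ).trace := Matrix.trace_mul_comm _ _
      _ = (C * X * Cᴴ).trace := rfl
  rw [h]
  exact trace_nonneg_of_psd (hX.mul_mul_conjTranspose_same C)

private lemma trace_fromBlocks' {m : Type*} [Fintype m]
    (M : Matrix m m ℝ) (N : Matrix m m ℝ) (P : Matrix m m ℝ) (Q : Matrix m m ℝ) :
    (Matrix.fromBlocks M N P Q).trace = M.trace + Q.trace := by
  simp [Matrix.trace, Fintype.sum_sum_type, Matrix.fromBlocks]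

private lemma Xdelta_psd {m : Type*} [Fintype m] [DecidableEq m]
    {A : Matrix m m ℝ} (hA : A.PosSemidef) (δ : ℝ) :
    (Matrix.fromBlocks A (δ • A) (δ • A) ((δ ^ 2) • A)).PosSemidef := by
  obtain ⟨C, hC⟩ := (by open scoped MatrixOrder Matrix.Norms.L2Operator in exact CStarAlgebra.nonneg_iff_eq_star_mul_self.mp hA.nonneg : ∃ C : Matrix m m ℝ, A = Cᴴ * C)
  have key : Matrix.fromBlocks A (δ • A) (δ • A) ((δ ^ 2) • A)
      = (Matrix.fromBlocks C (δ • C) 0 0)ᴴ * (Matrix.fromBlocks C (δ • C) 0 0) := by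
    have hC' : Cᵀ * C = A := by
      rw [hC]; congr 1
    rw [Matrix.fromBlocks_conjTranspose, Matrix.fromBlocks_multiply]
    simp [Matrix.conjTranspose_smul, Matrix.smul_mul, Matrix.mul_smul, smul_smul,
      hC', pow_two]
  rw [key]
  exact posSemidef_conjTranspose_mul_self _

/-- If `Y = [[νA, -½B], [-½B, (τν/(2σ))A]]` is positive semidefinite (with `A` symmetric
positive semidefinite and `B` symmetric), then for every `δ > 0` one has
`((2σν + δ²τν)/(2σδ)) Tr(A²) ≥ Tr(AB)`, and in particular
`√(2τν²/σ) Tr(A²) ≥ Tr(AB)`. -/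
theorem stmt12 (n : ℕ) (ν σ τ : ℝ) (hν : 0 < ν) (hσ : 0 < σ) (hτ : 0 < τ)
    (A B : Matrix (Fin n) (Fin n) ℝ) (hA : A.IsSymm) (hB : B.IsSymm) (hApsd : A.PosSemidef)
    (hY : (Matrix.fromBlocks (ν • A) ((-(1 : ℝ) / 2) • B) ((-(1 : ℝ) / 2) • B)
      ((τ * ν / (2 * σ)) • A)).PosSemidef) :
    (∀ δ : ℝ, 0 < δ →
        Matrix.trace (A * B) ≤ ((2 * σ * ν + δ ^ 2 * τ * ν) / (2 * σ * δ)) *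
          Matrix.trace (A * A)) ∧
    Matrix.trace (A * B) ≤ Real.sqrt (2 * τ * ν ^ 2 / σ) * Matrix.trace (A * A) := by
  have main : ∀ δ : ℝ, 0 < δ →
      Matrix.trace (A * B) ≤ ((2 * σ * ν + δ ^ 2 * τ * ν) / (2 * σ * δ)) *
        Matrix.trace (A * A) := by
    intro δ hδ
    have hX := Xdelta_psd hApsd δ
    have h0 := trace_mul_nonneg_of_psd hX hY
    rw [Matrix.fromBlocks_multiply, trace_fromBlocks'] at h0
    have h1 : 0 ≤ ν * Matrix.trace (A * A) - δ * Matrix.trace (A * B)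
        + δ ^ 2 * (τ * ν / (2 * σ)) * Matrix.trace (A * A) := by
      have e : (A * ν • A + δ • A * (-(1:ℝ) / 2) • B).trace
          + (δ • A * (-(1:ℝ) / 2) • B + δ ^ 2 • A * (τ * ν / (2 * σ)) • A).trace
          = ν * Matrix.trace (A * A) - δ * Matrix.trace (A * B)
            + δ ^ 2 * (τ * ν / (2 * σ)) * Matrix.trace (A * A) := by
        simp [Matrix.mul_smul, Matrix.smul_mul, Matrix.trace_add, Matrix.trace_smul,
          smul_smul, smul_eq_mul]
        ring
      linarith [e ▸ h0]
    rw [div_mul_eq_mul_div, le_div_iff₀ (by positivity)]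
    have h2 : 0 ≤ (2 * σ) * (ν * Matrix.trace (A * A) - δ * Matrix.trace (A * B)
        + δ ^ 2 * (τ * ν / (2 * σ)) * Matrix.trace (A * A)) :=
      mul_nonneg (by positivity) h1
    have h3 : (2 * σ) * (ν * Matrix.trace (A * A) - δ * Matrix.trace (A * B)
        + δ ^ 2 * (τ * ν / (2 * σ)) * Matrix.trace (A * A))
        = 2 * σ * ν * Matrix.trace (A * A) - 2 * σ * δ * Matrix.trace (A * B)
          + δ ^ 2 * τ * ν * Matrix.trace (A * A) := by
      field_simp
    rw [h3] at h2
    nlinarith [h2]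
  refine ⟨main, ?_⟩
  have hδ0 : (0:ℝ) < Real.sqrt (2 * σ / τ) := Real.sqrt_pos.mpr (by positivity)
  have h := main _ hδ0
  have hsq : Real.sqrt (2 * σ / τ) ^ 2 = 2 * σ / τ := Real.sq_sqrt (by positivity)
  have hco : (2 * σ * ν + Real.sqrt (2 * σ / τ) ^ 2 * τ * ν) / (2 * σ * Real.sqrt (2 * σ / τ))
      = Real.sqrt (2 * τ * ν ^ 2 / σ) := by
    rw [hsq]
    have h2 : 2 * τ * ν ^ 2 / σ = (2 * ν / Real.sqrt (2 * σ / τ)) ^ 2 := by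
      rw [div_pow, hsq]
      field_simp
    rw [h2, Real.sqrt_sq (by positivity)]
    field_simp
    ring
  rwa [hco] at h
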